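/- In every minimal triangulation of the hyper-boat graph Q_hb (two triangles {y_1,y_2,y_3} and {z_1,z_2,z_3} joined by the perfect matching y_iz_i, i = 1,2,3), there is a 4-clique containing two vertices from {y_1,y_2,y_3} and two from {z_1,z_2,z_3}. -/

import Mathlib

/-- A simple graph is chordal: every cycle of length at least 4 has a chord. -/
def IsChordal {W : Type*} (G : SimpleGraph W) : Prop :=
  ∀ ⦃v : W⦄ (c : G.Walk v v), c.IsCycle → 4 ≤ c.length →
    ∃ u w : W, u ∈ c.support ∧ w ∈ c.support ∧ G.Adj u w ∧ s(u, w) ∉ c.edges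

/-- `G'` is a minimal triangulation of `G`. -/
def IsMinimalTriangulation {W : Type*} (G G' : SimpleGraph W) : Prop :=
  G ≤ G' ∧ IsChordal G' ∧
    ∀ G'' : SimpleGraph W, G ≤ G'' → G'' ≤ G' → IsChordal G'' → G'' = G'

/-- The hyper-boat graph `Q_hb`: two triangles on `y = {0,1,2}` and
`z = {3,4,5}` joined by the perfect matching `y_i z_i`. -/
def Qhb : SimpleGraph (Fin 6) where
  Adj i j := i ≠ j ∧
    (((i : ℕ) < 3 ∧ (j : ℕ) < 3) ∨ (3 ≤ (i : ℕ) ∧ 3 ≤ (j : ℕ)) ∨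
      ((i : ℕ) + 3 = (j : ℕ)) ∨ ((j : ℕ) + 3 = (i : ℕ)))
  symm := by
    constructor
    rintro a b ⟨h1, h2⟩
    exact ⟨h1.symm, by tauto⟩
  loopless := by
    constructor
    rintro a ⟨h, _⟩
    exact h rfl

set_option maxHeartbeats 1000000 in
/-- In a chordal graph, every 4-cycle `a-b-c-d` has one of its two diagonals as an edge. -/
lemma chord_of_square {W : Type*} [DecidableEq W] {G : SimpleGraph W} (hG : IsChordal G)
    {a b c d : W} (hab : G.Adj a b) (hbc : G.Adj b c) (hcd : G.Adj c d) (hda : G.Adj d a)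
    (hac : a ≠ c) (hbd : b ≠ d) :
    G.Adj a c ∨ G.Adj b d := by
  have hab' := hab.ne
  have hbc' := hbc.ne
  have hcd' := hcd.ne
  have hda' := hda.ne
  let w : G.Walk a a := .cons hab (.cons hbc (.cons hcd (.cons hda .nil)))
  have hcyc : w.IsCycle := by
    constructor
    · constructor
      · simp [SimpleGraph.Walk.isTrail_def, w, Sym2.eq_iff]
        tauto
      · simp [w]
    · simp [w]
      tauto
  have hlen : 4 ≤ w.length := by simp [w]
  obtain ⟨u, v, hu, hv, huv, hne⟩ := hG w hcyc hlen
  have hne' := huv.ne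
  simp [w, Sym2.eq_iff] at hu hv hne
  clear hcyc hlen
  clear_value w
  clear w
  rcases hu with rfl | rfl | rfl | rfl | rfl <;> rcases hv with rfl | rfl | rfl | rfl | rfl <;>
    first
    | exact absurd rfl hne'
    | exact Or.inl huv
    | exact Or.inl huv.symm
    | exact Or.inr huv
    | exact Or.inr huv.symm
    | simp_all

/-- Every minimal triangulation of the hyper-boat graph contains a 4-clique with
two vertices from the `y`-side and two from the `z`-side. -/
theorem Qhb_minimal_triangulation_has_4clique (G' : SimpleGraph (Fin 6))
    (h : IsMinimalTriangulation Qhb G') :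
    ∃ i j k l : Fin 6, (i : ℕ) < 3 ∧ (j : ℕ) < 3 ∧ i ≠ j ∧
      3 ≤ (k : ℕ) ∧ 3 ≤ (l : ℕ) ∧ k ≠ l ∧
      G'.Adj i j ∧ G'.Adj i k ∧ G'.Adj i l ∧ G'.Adj j k ∧ G'.Adj j l ∧
      G'.Adj k l := by
  obtain ⟨hle, hch, -⟩ := h
  have q : ∀ a b : Fin 6, Qhb.Adj a b → G'.Adj a b := fun a b hab => hle hab
  have e01 : G'.Adj 0 1 := q _ _ ⟨by decide, by decide⟩
  have e02 : G'.Adj 0 2 := q _ _ ⟨by decide, by decide⟩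
  have e12 : G'.Adj 1 2 := q _ _ ⟨by decide, by decide⟩
  have e34 : G'.Adj 3 4 := q _ _ ⟨by decide, by decide⟩
  have e35 : G'.Adj 3 5 := q _ _ ⟨by decide, by decide⟩
  have e45 : G'.Adj 4 5 := q _ _ ⟨by decide, by decide⟩
  have e03 : G'.Adj 0 3 := q _ _ ⟨by decide, by decide⟩
  have e14 : G'.Adj 1 4 := q _ _ ⟨by decide, by decide⟩
  have e25 : G'.Adj 2 5 := q _ _ ⟨by decide, by decide⟩
  -- square 0-1-4-3 : chord 0-4 or 1-3
  have c1 := chord_of_square hch e01 e14 e34.symm e03.symm (by decide) (by decide)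
  -- square 0-2-5-3 : chord 0-5 or 2-3
  have c2 := chord_of_square hch e02 e25 e35.symm e03.symm (by decide) (by decide)
  -- square 1-2-5-4 : chord 1-5 or 2-4
  have c3 := chord_of_square hch e12 e25 e45.symm e14.symm (by decide) (by decide)
  rcases c1 with h04 | h13
  · rcases c2 with h05 | h23
    · rcases c3 with h15 | h24
      · -- clique 0,1,4,5
        exact ⟨0, 1, 4, 5, by decide, by decide, by decide, by decide, by decide, by decide,
          e01, h04, h05, e14, h15, e45⟩
      · -- clique 0,2,4,5
        exact ⟨0, 2, 4, 5, by decide, by decide, by decide, by decide, by decide, by decide,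
          e02, h04, h05, h24, e25, e45⟩
    · rcases c3 with h15 | h24
      · -- cyclic case {04, 23, 15}: square 0-4-5-2 gives chord 0-5 or 4-2
        rcases chord_of_square hch h04 e45 e25.symm e02.symm (by decide) (by decide) with
          h05 | h42
        · exact ⟨0, 1, 4, 5, by decide, by decide, by decide, by decide, by decide, by decide,
            e01, h04, h05, e14, h15, e45⟩
        · exact ⟨1, 2, 4, 5, by decide, by decide, by decide, by decide, by decide, by decide,
            e12, e14, h15, h42.symm, e25, e45⟩
      · -- clique 0,2,3,4
        exact ⟨0, 2, 3, 4, by decide, by decide, by decide, by decide, by decide, by decide,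
          e02, e03, h04, h23, h24, e34⟩
  · rcases c2 with h05 | h23
    · rcases c3 with h15 | h24
      · -- clique 0,1,3,5
        exact ⟨0, 1, 3, 5, by decide, by decide, by decide, by decide, by decide, by decide,
          e01, e03, h05, h13, h15, e35⟩
      · -- cyclic case {13, 05, 24}: square 0-5-4-1 gives chord 0-4 or 5-1
        rcases chord_of_square hch h05 e45.symm e14.symm e01.symm (by decide) (by decide) with
          h04 | h51
        · exact ⟨0, 1, 3, 4, by decide, by decide, by decide, by decide, by decide, by decide,
            e01, e03, h04, h13, e14, e34⟩
        · exact ⟨1, 2, 4, 5, by decide, by decide, by decide, by decide, by decide, by decide,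
            e12, e14, h51.symm, h24, e25, e45⟩
    · rcases c3 with h15 | h24
      · -- clique 1,2,3,5
        exact ⟨1, 2, 3, 5, by decide, by decide, by decide, by decide, by decide, by decide,
          e12, h13, h15, h23, e25, e35⟩
      · -- clique 1,2,3,4
        exact ⟨1, 2, 3, 4, by decide, by decide, by decide, by decide, by decide, by decide,
          e12, h13, e14, h23, h24, e34⟩
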